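/- For 2 ≤ i ≤ d and 0 ≤ j ≤ i−2, define Δ_{i,j} := sym_{S_{i+1}}((⊗_{k=0}^{i−1} h_k) ⊗ l_j) + Σ_{m=i}^{d} sym_{S_{i+1}}((⊗_{k=0,k≠j}^{i−1} h_k) ⊗ h_m ⊗ l_m) ∈ A^{⊗(i+1)}, and similarly Δ_{i−1,j} ∈ A^{⊗i}. Let σ ∈ S_{i+1} be the cyclic permutation (0 1 ⋯ i). Then Δ_{i,j} = Σ_{r=0}^{i} σ^r·( Δ_{i−1,j} ⊗ h_{i−1} ). -/

import Mathlib

open PiTensorProduct TensorProduct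

/-- The permutation action of `Equiv.Perm (Fin m)` on the `m`-fold tensor power over `𝔽₂`,
permuting the tensor factors. -/
noncomputable def permAct (A : Type) [AddCommGroup A] [Module (ZMod 2) A]
    (m : ℕ) (s : Equiv.Perm (Fin m)) :
    (⨂[ZMod 2] _ : Fin m, A) →ₗ[ZMod 2] ⨂[ZMod 2] _ : Fin m, A :=
  (PiTensorProduct.reindex (ZMod 2) (fun _ : Fin m => A) s).toLinearMap

/-- The family `(h_0, …, h_{i-1}, l_j)` of the `i+1` tensor factors of the leading term
of `Δ_{i,j}`. -/
def uFam (A : Type) (h l : ℕ → A) (i j : ℕ) : Fin (i+1) → A :=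
  fun k => if k.val = i then l j else h k.val

/-- The family `(h_0, …, ĥ_j, …, h_{i-1}, h_m, l_m)` (with `h_j` omitted) of the `i+1`
tensor factors of the `m`-th correction term of `Δ_{i,j}`. -/
def wFam (A : Type) (h l : ℕ → A) (i j m : ℕ) : Fin (i+1) → A :=
  fun k =>
    if k.val < i - 1 then (if k.val < j then h k.val else h (k.val + 1))
    else if k.val = i - 1 then h m else l m

/-- The cycle `Δ_{i,j} := sym_{S_{i+1}}((⊗_{k=0}^{i−1} h_k) ⊗ l_j)
+ Σ_{m=i}^{d} sym_{S_{i+1}}((⊗_{k=0,k≠j}^{i−1} h_k) ⊗ h_m ⊗ l_m)` in `A^{⊗(i+1)}`. -/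
noncomputable def DeltaCycle (d : ℕ) (A : Type) [AddCommGroup A] [Module (ZMod 2) A]
    (h l : ℕ → A) (i j : ℕ) : ⨂[ZMod 2] _ : Fin (i+1), A :=
  (∑ s : Equiv.Perm (Fin (i+1)), ⨂ₜ[ZMod 2] k, uFam A h l i j (s k)) +
    ∑ m ∈ Finset.Icc i d, ∑ s : Equiv.Perm (Fin (i+1)), ⨂ₜ[ZMod 2] k, wFam A h l i j m (s k)

section Aux

variable {A : Type} [AddCommGroup A] [Module (ZMod 2) A]

open scoped Fin.NatCast Fin.CommRing

noncomputable def symSum {n : ℕ} (v : Fin n → A) : ⨂[ZMod 2] _ : Fin n, A :=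
  ∑ s : Equiv.Perm (Fin n), ⨂ₜ[ZMod 2] k, v (s k)

lemma symSum_comp {n : ℕ} (v : Fin n → A) (e : Equiv.Perm (Fin n)) :
    symSum (fun k => v (e k)) = symSum v := by
  unfold symSum
  refine Fintype.sum_equiv (Equiv.mulLeft e) _ _ fun s => ?_
  simp [Equiv.Perm.mul_apply]

lemma symSum_eq_zero {n : ℕ} (v : Fin n → A) (a b : Fin n) (hab : a ≠ b)
    (hv : v a = v b) : symSum v = 0 := by
  unfold symSum
  refine Finset.sum_involution (fun s _ => Equiv.swap a b * s) (fun s _ => ?_)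
    (fun s _ _ => ?_) (fun s hs => Finset.mem_univ _) (fun s _ => ?_)
  · have : (⨂ₜ[ZMod 2] k, v ((Equiv.swap a b * s) k)) = ⨂ₜ[ZMod 2] k, v (s k) := by
      congr 1
      funext k
      rw [Equiv.Perm.mul_apply, Equiv.swap_apply_def]
      split_ifs with h1 h2
      · rw [h1, hv]
      · rw [h2, hv]
      · rfl
    rw [this, ← two_smul (ZMod 2), show (2 : ZMod 2) = 0 from rfl, zero_smul]
  · intro hcon
    have := congrArg (fun (t : Equiv.Perm (Fin n)) => t (s⁻¹ a)) hcon
    simp [Equiv.Perm.mul_apply] at this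
    exact hab this.symm
  · show Equiv.swap a b * (Equiv.swap a b * s) = s
    rw [← mul_assoc, Equiv.swap_mul_self, one_mul]

lemma pow_finRotate_apply {n : ℕ} (r : ℕ) (x : Fin (n+1)) :
    ((finRotate (n+1)) ^ r) x = x + (r : Fin (n+1)) := by
  induction r with
  | zero => simp
  | succ r ih =>
      rw [pow_succ', Equiv.Perm.mul_apply, ih, finRotate_succ_apply]
      push_cast
      ring

lemma coset_sum {M : Type*} [AddCommMonoid M] (n : ℕ) (f : Equiv.Perm (Fin (n+1)) → M) :
    ∑ r ∈ Finset.range (n+1),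
      ∑ τ ∈ Finset.univ.filter
          (fun τ : Equiv.Perm (Fin (n+1)) => τ (Fin.last n) = Fin.last n),
        f (τ * ((finRotate (n+1)) ^ r)⁻¹) = ∑ s : Equiv.Perm (Fin (n+1)), f s := by
  rw [← Finset.sum_product']
  refine Finset.sum_nbij' (fun p => p.2 * ((finRotate (n+1)) ^ p.1)⁻¹)
    (fun s => (((s⁻¹ (Fin.last n) + 1 : Fin (n+1))).val,
      s * (finRotate (n+1)) ^ (((s⁻¹ (Fin.last n) + 1 : Fin (n+1))).val)))
    (fun p _ => Finset.mem_univ _) ?_ ?_ ?_ (fun p _ => rfl)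
  · intro s _
    rw [Finset.mem_product, Finset.mem_range, Finset.mem_filter]
    refine ⟨(Fin.is_lt _), Finset.mem_univ _, ?_⟩
    rw [Equiv.Perm.mul_apply, pow_finRotate_apply, Fin.cast_val_eq_self]
    rw [← add_assoc, show Fin.last n + s⁻¹ (Fin.last n) = s⁻¹ (Fin.last n) + Fin.last n from add_comm _ _,
      add_assoc, Fin.last_add_one, add_zero, ← Equiv.Perm.mul_apply, mul_inv_cancel,
      Equiv.Perm.one_apply]
  · rintro ⟨r, τ⟩ hp
    rw [Finset.mem_product, Finset.mem_range, Finset.mem_filter] at hp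
    obtain ⟨hr, _, hτ⟩ := hp
    have hτinv : τ⁻¹ (Fin.last n) = Fin.last n := by
      exact τ.injective (by rw [hτ, ← Equiv.Perm.mul_apply, mul_inv_cancel, Equiv.Perm.one_apply])
    have hinv : (τ * ((finRotate (n+1)) ^ r)⁻¹)⁻¹ (Fin.last n) = Fin.last n + (r : Fin (n+1)) := by
      rw [mul_inv_rev, inv_inv, Equiv.Perm.mul_apply, hτinv, pow_finRotate_apply]
    have hval : ((τ * ((finRotate (n+1)) ^ r)⁻¹)⁻¹ (Fin.last n) + 1 : Fin (n+1)).val = r := by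
      rw [hinv, add_assoc, show ((r : Fin (n+1)) + 1 : Fin (n+1)) = 1 + r from add_comm _ _,
        ← add_assoc, Fin.last_add_one, zero_add, Fin.val_cast_of_lt hr]
    refine Prod.ext hval ?_
    simp only [hval]
    rw [inv_mul_cancel_right]
  · intro s _
    simp only [mul_inv_cancel_right]

end Aux

lemma uFam_eq (A : Type) (h l : ℕ → A) (i j : ℕ) (hi2 : 2 ≤ i) (k : Fin (i+1)) :
    uFam A h l i j (Equiv.swap ⟨i-1, by omega⟩ (Fin.last i) k) =
      (if k.val < i - 1 then h k.val else if k.val = i - 1 then l j else h (i-1)) := by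
  have hk := k.is_lt
  unfold uFam
  rcases Nat.lt_trichotomy k.val (i-1) with hlt | heq | hgt
  · have e1 : Equiv.swap (⟨i-1, by omega⟩ : Fin (i+1)) (Fin.last i) k = k :=
      Equiv.swap_apply_of_ne_of_ne (Fin.ne_of_val_ne (show k.val ≠ i-1 by omega))
        (Fin.ne_of_val_ne (show k.val ≠ i by omega))
    rw [e1, if_neg (show ¬(k.val = i) by omega), if_pos hlt]
  · have hK : k = (⟨i-1, by omega⟩ : Fin (i+1)) := Fin.ext heq
    rw [hK, Equiv.swap_apply_left]
    simp only [Fin.val_last, Fin.val_mk]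
    rw [if_pos trivial, if_neg (show ¬(i-1 < i-1) by omega), if_pos trivial]
  · have hK : k = Fin.last i := Fin.ext (show k.val = i by omega)
    rw [hK, Equiv.swap_apply_right]
    simp only [Fin.val_last, Fin.val_mk]
    rw [if_neg (show ¬(i-1 = i) by omega), if_neg (show ¬(i < i-1) by omega),
      if_neg (show ¬(i = i-1) by omega)]

lemma wFam_eq (A : Type) (h l : ℕ → A) (i j m : ℕ) (hi2 : 2 ≤ i) (hj : j ≤ i - 2)
    (k : Fin (i+1)) :
    wFam A h l i j m
      ((Equiv.swap (⟨i-2, by omega⟩ : Fin (i+1)) ⟨i-1, by omega⟩ *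
        Equiv.swap (⟨i-1, by omega⟩ : Fin (i+1)) (Fin.last i)) k) =
      (if k.val < i - 2 then (if k.val < j then h k.val else h (k.val + 1))
        else if k.val = i - 2 then h m
        else if k.val = i - 1 then l m
        else h (i-1)) := by
  have hk := k.is_lt
  rw [Equiv.Perm.mul_apply]
  unfold wFam
  have h21 : (⟨i-2, by omega⟩ : Fin (i+1)) ≠ ⟨i-1, by omega⟩ :=
    Fin.ne_of_val_ne (show i-2 ≠ i-1 by omega)
  rcases Nat.lt_trichotomy k.val (i-2) with hlt | heq | hgt
  · have e1 : Equiv.swap (⟨i-1, by omega⟩ : Fin (i+1)) (Fin.last i) k = k :=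
      Equiv.swap_apply_of_ne_of_ne (Fin.ne_of_val_ne (show k.val ≠ i-1 by omega))
        (Fin.ne_of_val_ne (show k.val ≠ i by omega))
    have e2 : Equiv.swap (⟨i-2, by omega⟩ : Fin (i+1)) ⟨i-1, by omega⟩ k = k :=
      Equiv.swap_apply_of_ne_of_ne (Fin.ne_of_val_ne (show k.val ≠ i-2 by omega))
        (Fin.ne_of_val_ne (show k.val ≠ i-1 by omega))
    rw [e1, e2, if_pos (show k.val < i-1 by omega), if_pos hlt]
  · have hK : k = (⟨i-2, by omega⟩ : Fin (i+1)) := Fin.ext heq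
    have e1 : Equiv.swap (⟨i-1, by omega⟩ : Fin (i+1)) (Fin.last i)
        (⟨i-2, by omega⟩ : Fin (i+1)) = ⟨i-2, by omega⟩ :=
      Equiv.swap_apply_of_ne_of_ne (Fin.ne_of_val_ne (show i-2 ≠ i-1 by omega))
        (Fin.ne_of_val_ne (show i-2 ≠ i by omega))
    rw [hK, e1, Equiv.swap_apply_left]
    simp only [Fin.val_last, Fin.val_mk]
    rw [if_neg (show ¬(i-1 < i-1) by omega), if_pos trivial,
      if_neg (show ¬(i-2 < i-2) by omega), if_pos trivial]
  · rcases Nat.lt_trichotomy k.val (i-1) with hlt2 | heq2 | hgt2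
    · omega
    · have hK : k = (⟨i-1, by omega⟩ : Fin (i+1)) := Fin.ext heq2
      have e2 : Equiv.swap (⟨i-2, by omega⟩ : Fin (i+1)) ⟨i-1, by omega⟩ (Fin.last i)
          = Fin.last i :=
        Equiv.swap_apply_of_ne_of_ne (Fin.ne_of_val_ne (show i ≠ i-2 by omega))
          (Fin.ne_of_val_ne (show i ≠ i-1 by omega))
      rw [hK, Equiv.swap_apply_left, e2]
      simp only [Fin.val_last, Fin.val_mk]
      rw [if_neg (show ¬(i < i-1) by omega), if_neg (show ¬(i = i-1) by omega),
        if_neg (show ¬(i-1 < i-2) by omega), if_neg (show ¬(i-1 = i-2) by omega),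
        if_pos trivial]
    · have hK : k = Fin.last i := Fin.ext (show k.val = i by omega)
      have e2 : Equiv.swap (⟨i-2, by omega⟩ : Fin (i+1)) ⟨i-1, by omega⟩
          (⟨i-1, by omega⟩ : Fin (i+1)) = ⟨i-2, by omega⟩ := Equiv.swap_apply_right _ _
      rw [hK, Equiv.swap_apply_right, e2]
      simp only [Fin.val_last, Fin.val_mk]
      rw [if_pos (show i-2 < i-1 by omega), if_neg (show ¬(i-2 < j) by omega),
        if_neg (show ¬(i < i-2) by omega), if_neg (show ¬(i = i-2) by omega),
        if_neg (show ¬(i = i-1) by omega)]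
      exact congrArg h (by omega)

set_option maxHeartbeats 1000000

/-- The recursive identity `Δ_{i,j} = Σ_{r=0}^{i} σ^r·(Δ_{i−1,j} ⊗ h_{i−1})` for the cycles
`Δ_{i,j}` on powers of a split quadric, where `σ` is the cyclic permutation `(0 1 ⋯ i)` and
`Δ_{i−1,j} ⊗ h_{i−1}` is viewed in `A^{⊗(i+1)}` (the partial symmetrizations `sym_{S_i}` being
written as sums over the permutations of `Fin (i+1)` fixing the last slot, which carries
`h_{i−1}`). -/
theorem Delta_recursion (d : ℕ) (hd : 1 ≤ d)
    (A : Type) [AddCommGroup A] [Module (ZMod 2) A] (h l : ℕ → A)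
    (i j : ℕ) (hi2 : 2 ≤ i) (hid : i ≤ d) (hj : j ≤ i - 2) :
    DeltaCycle d A h l i j =
      ∑ r ∈ Finset.range (i+1),
        permAct A (i+1) ((finRotate (i+1)) ^ r)
          ((∑ τ ∈ Finset.univ.filter
              (fun τ : Equiv.Perm (Fin (i+1)) => τ (Fin.last i) = Fin.last i),
            ⨂ₜ[ZMod 2] k, (fun t : Fin (i+1) =>
              if t.val < i - 1 then h t.val
              else if t.val = i - 1 then l j
              else h (i-1)) (τ k)) +
          ∑ m ∈ Finset.Icc (i-1) d,
            ∑ τ ∈ Finset.univ.filter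
                (fun τ : Equiv.Perm (Fin (i+1)) => τ (Fin.last i) = Fin.last i),
              ⨂ₜ[ZMod 2] k, (fun t : Fin (i+1) =>
                if t.val < i - 2 then (if t.val < j then h t.val else h (t.val + 1))
                else if t.val = i - 2 then h m
                else if t.val = i - 1 then l m
                else h (i-1)) (τ k)) := by
  classical
  have key : ∀ v : Fin (i+1) → A,
      (∑ r ∈ Finset.range (i+1), ∑ τ ∈ Finset.univ.filter
          (fun τ : Equiv.Perm (Fin (i+1)) => τ (Fin.last i) = Fin.last i),
        permAct A (i+1) ((finRotate (i+1)) ^ r) (⨂ₜ[ZMod 2] k, v (τ k))) = symSum v := by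
    intro v
    have h0 : symSum v = ∑ s : Equiv.Perm (Fin (i+1)), ⨂ₜ[ZMod 2] k, v (s k) := rfl
    rw [h0, ← coset_sum i (fun s => ⨂ₜ[ZMod 2] k, v (s k))]
    refine Finset.sum_congr rfl fun r _ => Finset.sum_congr rfl fun τ _ => ?_
    simp only [permAct, LinearEquiv.coe_coe, PiTensorProduct.reindex_tprod]
    rfl
  have hL : DeltaCycle d A h l i j =
      symSum (uFam A h l i j) + ∑ m ∈ Finset.Icc i d, symSum (wFam A h l i j m) := rfl
  rw [hL]
  simp only [map_add, map_sum]
  rw [Finset.sum_add_distrib]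
  congr 1
  · rw [key (fun t : Fin (i+1) =>
      if t.val < i - 1 then h t.val else if t.val = i - 1 then l j else h (i-1))]
    rw [← symSum_comp (uFam A h l i j) (Equiv.swap ⟨i-1, by omega⟩ (Fin.last i))]
    congr 1
    funext k
    exact uFam_eq A h l i j hi2 k
  · have hw : (∑ m ∈ Finset.Icc (i-1) d, ∑ r ∈ Finset.range (i+1),
        ∑ τ ∈ Finset.univ.filter
            (fun τ : Equiv.Perm (Fin (i+1)) => τ (Fin.last i) = Fin.last i),
          permAct A (i+1) ((finRotate (i+1)) ^ r)
            (⨂ₜ[ZMod 2] k, (fun t : Fin (i+1) =>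
              if t.val < i - 2 then (if t.val < j then h t.val else h (t.val + 1))
              else if t.val = i - 2 then h m
              else if t.val = i - 1 then l m
              else h (i-1)) (τ k)))
        = ∑ m ∈ Finset.Icc (i-1) d, symSum (fun t : Fin (i+1) =>
            if t.val < i - 2 then (if t.val < j then h t.val else h (t.val + 1))
            else if t.val = i - 2 then h m
            else if t.val = i - 1 then l m
            else h (i-1)) := by
      refine Finset.sum_congr rfl fun m _ => ?_
      exact key (fun t : Fin (i+1) =>
        if t.val < i - 2 then (if t.val < j then h t.val else h (t.val + 1))
        else if t.val = i - 2 then h m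
        else if t.val = i - 1 then l m
        else h (i-1))
    rw [Finset.sum_comm, hw]
    have hIcc : Finset.Icc (i-1) d = insert (i-1) (Finset.Icc i d) := by
      ext x; simp only [Finset.mem_Icc, Finset.mem_insert]; omega
    have hnot : (i-1) ∉ Finset.Icc i d := by
      simp only [Finset.mem_Icc]; omega
    rw [hIcc, Finset.sum_insert hnot]
    have hzero : symSum (fun t : Fin (i+1) =>
        if t.val < i - 2 then (if t.val < j then h t.val else h (t.val + 1))
        else if t.val = i - 2 then h (i-1)
        else if t.val = i - 1 then l (i-1)
        else h (i-1)) = 0 := by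
      refine symSum_eq_zero _ ⟨i-2, by omega⟩ (Fin.last i)
        (Fin.ne_of_val_ne (show i-2 ≠ i by omega)) ?_
      simp only [Fin.val_last, Fin.val_mk]
      rw [if_neg (show ¬((i:ℕ)-2 < i-2) by omega), if_pos trivial,
        if_neg (show ¬((i:ℕ) < i-2) by omega), if_neg (show ¬((i:ℕ) = i-2) by omega),
        if_neg (show ¬((i:ℕ) = i-1) by omega)]
    rw [hzero, zero_add]
    refine Finset.sum_congr rfl fun m hm => ?_
    rw [← symSum_comp (wFam A h l i j m)
      (Equiv.swap (⟨i-2, by omega⟩ : Fin (i+1)) ⟨i-1, by omega⟩ *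
        Equiv.swap (⟨i-1, by omega⟩ : Fin (i+1)) (Fin.last i))]
    congr 1
    funext k
    exact wFam_eq A h l i j m hi2 hj k
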